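/- In the active graph Γ(M) of a stable matching M, every connected component contains at most one cycle. -/

import Mathlib

/-- A finite bipartite graph with strict preference orders.
Vertices on one side have type `I` ("men"), on the other side `J` ("women").
Edges are pairs `(m, w) : I × J`; the edge set is `E`.
`pI m e f` means vertex `m ∈ I` strictly prefers edge `e` to edge `f`
(both incident to `m`); similarly `pJ` for the `J` side.
The axioms say that each `pI m` (resp. `pJ w`) is a strict linear order
on the set `δ(m)` (resp. `δ(w)`) of edges of `E` incident to the vertex. -/
structure PrefSystem (I J : Type) where
  E : Finset (I × J)
  pI : I → (I × J) → (I × J) → Prop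
  pJ : J → (I × J) → (I × J) → Prop
  pI_irrefl : ∀ m e, ¬ pI m e e
  pI_trans : ∀ m e f g, pI m e f → pI m f g → pI m e g
  pI_total : ∀ m e f, e ∈ E → f ∈ E → e.1 = m → f.1 = m → e ≠ f → pI m e f ∨ pI m f e
  pJ_irrefl : ∀ w e, ¬ pJ w e e
  pJ_trans : ∀ w e f g, pJ w e f → pJ w f g → pJ w e g
  pJ_total : ∀ w e f, e ∈ E → f ∈ E → e.2 = w → f.2 = w → e ≠ f → pJ w e f ∨ pJ w f e

variable {I J : Type}

/-- `M` is a matching: a set of edges of `G`, no two of which share a vertex. -/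
def IsMatching (G : PrefSystem I J) (M : Finset (I × J)) : Prop :=
  M ⊆ G.E ∧ ∀ e ∈ M, ∀ f ∈ M, e ≠ f → e.1 ≠ f.1 ∧ e.2 ≠ f.2

/-- The edge `e ∈ E \ M` blocks `M` if, for each endpoint `v` of `e`,
either `v` is uncovered by `M` or `v` strictly prefers `e` to its `M`-edge. -/
def Blocks (G : PrefSystem I J) (M : Finset (I × J)) (e : I × J) : Prop :=
  e ∈ G.E ∧ e ∉ M ∧ (∀ f ∈ M, f.1 = e.1 → G.pI e.1 e f) ∧
    (∀ f ∈ M, f.2 = e.2 → G.pJ e.2 e f)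

/-- A stable matching: a matching with no blocking edge. -/
def IsStable (G : PrefSystem I J) (M : Finset (I × J)) : Prop :=
  IsMatching G M ∧ ∀ e, ¬ Blocks G M e

/-- `a = mw ∉ M` is admissible for `M`: `M` has an edge at `m` preferred to `a`,
and either `w` is uncovered by `M` or `a` is preferred by `w` to its `M`-edge. -/
def Admissible (G : PrefSystem I J) (M : Finset (I × J)) (a : I × J) : Prop :=
  a ∈ G.E ∧ a ∉ M ∧ (∃ e ∈ M, e.1 = a.1 ∧ G.pI a.1 e a) ∧
    (∀ e ∈ M, e.2 = a.2 → G.pJ a.2 a e)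

/-- `a` is the active edge at the vertex `a.1 ∈ I`: the most preferred
admissible edge incident to `a.1`. -/
def ActiveEdge (G : PrefSystem I J) (M : Finset (I × J)) (a : I × J) : Prop :=
  Admissible G M a ∧ ∀ b, Admissible G M b → b.1 = a.1 → b = a ∨ G.pI a.1 a b

/-- `e` is an edge of the active graph `Γ(M)`: a matching edge or an active edge. -/
def InGamma (G : PrefSystem I J) (M : Finset (I × J)) (e : I × J) : Prop :=
  e ∈ M ∨ ActiveEdge G M e

/-- A rotation for `M`: a (simple, alternating) cycle of the active graph `Γ(M)`,
given as a cyclic sequence `c` of `k ≥ 2` distinct edges of `Γ(M)`, consecutive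
edges sharing a vertex, alternating between `M`-edges and active edges, and such
that non-consecutive edges share no vertex. -/
def IsRotation (G : PrefSystem I J) (M : Finset (I × J))
    (k : ℕ) (c : ZMod k → I × J) : Prop :=
  2 ≤ k ∧ Function.Injective c ∧
  (∀ i, InGamma G M (c i)) ∧
  (∀ i, (c i).1 = (c (i + 1)).1 ∨ (c i).2 = (c (i + 1)).2) ∧
  (∀ i, c i ∈ M ↔ c (i + 1) ∉ M) ∧
  (∀ i j : ZMod k, i ≠ j → ((c i).1 = (c j).1 ∨ (c i).2 = (c j).2) →
    j = i + 1 ∨ i = j + 1)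

/-- The active graph `Γ(M)` as a simple graph on the vertex set `I ⊕ J`. -/
def gammaSG (G : PrefSystem I J) (M : Finset (I × J)) : SimpleGraph (I ⊕ J) where
  Adj u v := match u, v with
    | Sum.inl m, Sum.inr w => InGamma G M (m, w)
    | Sum.inr w, Sum.inl m => InGamma G M (m, w)
    | _, _ => False
  symm := ⟨by rintro (m | w) (m' | w') h <;> simp_all⟩
  loopless := ⟨by rintro (m | w) h <;> simp_all⟩

/-! ### Auxiliary machinery -/

section AuxOneCycle

open Relation

/-- The successor relation: `SRel v w` holds when the unique Γ-edge "owned" by `v`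
has other endpoint `w`. A man `m` owns his active edge; a woman `w` owns her
matching edge. -/
def SRel (G : PrefSystem I J) (M : Finset (I × J)) : (I ⊕ J) → (I ⊕ J) → Prop
  | Sum.inl m, Sum.inr w => ActiveEdge G M (m, w)
  | Sum.inr w, Sum.inl m => (m, w) ∈ M
  | Sum.inl _, Sum.inl _ => False
  | Sum.inr _, Sum.inr _ => False

variable {G : PrefSystem I J} {M : Finset (I × J)}

lemma SRel_func (hM : IsMatching G M) :
    ∀ {v x y : I ⊕ J}, SRel G M v x → SRel G M v y → x = y := by
  rintro (m | w) (x | x) (y | y) hx hy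
  · exact hx.elim
  · exact hx.elim
  · exact hy.elim
  · -- two active edges at m
    rcases hx.2 (m, y) hy.1 rfl with h1 | h1
    · exact congrArg Sum.inr (congrArg Prod.snd h1).symm
    rcases hy.2 (m, x) hx.1 rfl with h2 | h2
    · exact congrArg Sum.inr (congrArg Prod.snd h2)
    · exact absurd (G.pI_trans m (m, x) (m, y) (m, x) h1 h2) (G.pI_irrefl m (m, x))
  · -- two matching edges at w
    by_contra hne
    have hne' : (x, w) ≠ (y, w) := by
      intro h; exact hne (congrArg Sum.inl (congrArg Prod.fst h))
    exact (hM.2 (x, w) hx (y, w) hy hne').2 rfl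
  · exact hy.elim
  · exact hx.elim
  · exact hx.elim

lemma SRel_adj {v w : I ⊕ J} :
    (gammaSG G M).Adj v w ↔ SRel G M v w ∨ SRel G M w v := by
  rcases v with m | a <;> rcases w with m' | a'
  · exact ⟨fun h => h.elim, fun h => (h.elim (fun h' => h'.elim) (fun h' => h'.elim))⟩
  · show InGamma G M (m, a') ↔ ActiveEdge G M (m, a') ∨ (m, a') ∈ M
    rw [InGamma]; exact or_comm
  · show InGamma G M (m', a) ↔ (m', a) ∈ M ∨ ActiveEdge G M (m', a)
    rw [InGamma]
  · exact ⟨fun h => h.elim, fun h => (h.elim (fun h' => h'.elim) (fun h' => h'.elim))⟩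

/-- On a closed list whose consecutive elements are adjacent, with distinct
interior vertices, the successor relation orients the whole list consistently. -/
lemma chain_dichotomy {V : Type} {A S : V → V → Prop}
    (hAS : ∀ x y, A x y → S x y ∨ S y x)
    (hfun : ∀ v x y, S v x → S v y → x = y)
    (L : List V) (hadj : L.Chain' A)
    (hlen : 4 ≤ L.length)
    (hne : L ≠ [])
    (hclosed : L.getLast hne = L.head hne)
    (htail : L.tail.Nodup) :
    L.Chain' S ∨ L.reverse.Chain' S := by
  classical
  set n := L.length with hn
  have hn4 : 4 ≤ n := hlen
  let d : V := L.head hne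
  let f : ℕ → V := fun i => L.getD i d
  have hf : ∀ (i : ℕ) (h : i < n), f i = L[i]'h := fun i h => List.getD_eq_getElem L d h
  have hA : ∀ i, i + 1 < n → A (f i) (f (i + 1)) := by
    intro i h
    have h2 := List.isChain_iff_getElem.mp hadj i (by omega)
    rwa [← hf i (by omega), ← hf (i + 1) (by omega)] at h2
  have hinj : ∀ i j, i + 1 < n → j + 1 < n → f (i + 1) = f (j + 1) → i = j := by
    intro i j hi hj hEq
    have hti : i < L.tail.length := by simp only [List.length_tail]; omega
    have htj : j < L.tail.length := by simp only [List.length_tail]; omega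
    have h1 : L.tail.get ⟨i, hti⟩ = L.tail.get ⟨j, htj⟩ := by
      rw [List.get_tail, List.get_tail]
      simp only [List.get_eq_getElem]
      rw [← hf (i + 1) (by omega), ← hf (j + 1) (by omega)]
      exact hEq
    have h2 := (List.Nodup.get_inj_iff htail).mp h1
    exact congrArg Fin.val h2
  have hcl : f 0 = f (n - 1) := by
    rw [hf 0 (by omega), hf (n - 1) (by omega)]
    have h1 : L.head hne = L[0]'(by omega) := List.head_eq_getElem_zero hne
    have h2 : L.getLast hne = L[n - 1]'(by omega) := List.getLast_eq_getElem hne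
    rw [← h1, ← h2, hclosed]
  have hne2 : ∀ i, i + 2 < n → f i ≠ f (i + 2) := by
    intro i h hEq
    rcases Nat.eq_zero_or_pos i with rfl | hi
    · have hq : f (n - 1) = f 2 := by rw [← hcl]; exact hEq
      have h3 : n - 2 + 1 = n - 1 := by omega
      have := hinj (n - 2) 1 (by omega) (by omega) (by rw [h3]; exact hq)
      omega
    · obtain ⟨i', rfl⟩ : ∃ i', i = i' + 1 := ⟨i - 1, by omega⟩
      have := hinj i' (i' + 2) (by omega) (by omega) hEq
      omega
  have stp : ∀ x y z, S y x → A y z → x ≠ z → S z y := fun x y z h1 h2 h3 =>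
    (hAS y z h2).elim (fun h4 => absurd (hfun y x z h1 h4) h3) id
  have prop : ∀ i, i + 2 < n → S (f (i + 1)) (f i) → S (f (i + 2)) (f (i + 1)) :=
    fun i h hB => stp (f i) (f (i + 1)) (f (i + 2)) hB (hA (i + 1) (by omega)) (hne2 i h)
  have up : ∀ k i, i + k + 1 < n → S (f (i + 1)) (f i) → S (f (i + k + 1)) (f (i + k)) := by
    intro k
    induction k with
    | zero => intro i h hB; simpa using hB
    | succ k ih =>
      intro i h hB
      exact prop (i + k) (by omega) (ih i (by omega) hB)
  have wrap : S (f (n - 1)) (f (n - 2)) → S (f 1) (f 0) := by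
    intro hB
    rw [← hcl] at hB
    refine stp (f (n - 2)) (f 0) (f 1) hB (hA 0 (by omega)) ?_
    intro hEq
    have h3 : n - 3 + 1 = n - 2 := by omega
    have := hinj (n - 3) 0 (by omega) (by omega) (by rw [h3]; exact hEq)
    omega
  by_cases hex : ∃ i, i + 1 < n ∧ S (f (i + 1)) (f i)
  · right
    rcases hex with ⟨i, hi, hB⟩
    have hBn2 : S (f (n - 1)) (f (n - 2)) := by
      have h1 := up (n - 2 - i) i (by omega) hB
      have e2 : i + (n - 2 - i) + 1 = n - 1 := by omega
      have e1 : i + (n - 2 - i) = n - 2 := by omega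
      rwa [e2, e1] at h1
    have hB0 := wrap hBn2
    have hall : ∀ j, j + 1 < n → S (f (j + 1)) (f j) := by
      intro j hj
      rcases Nat.eq_zero_or_pos j with rfl | hjpos
      · exact hB0
      · have h1 := up j 0 (by omega) hB0
        simpa using h1
    show List.IsChain S L.reverse
    rw [List.isChain_reverse]
    refine List.isChain_iff_getElem.mpr fun i h => ?_
    have h2 := hall i (by omega)
    rw [hf (i + 1) (by omega), hf i (by omega)] at h2
    exact h2
  · left
    push_neg at hex
    refine List.isChain_iff_getElem.mpr fun i h => ?_
    have hFB := (hAS (f i) (f (i + 1)) (hA i (by omega))).resolve_right (hex i (by omega))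
    rw [hf i (by omega), hf (i + 1) (by omega)] at hFB
    exact hFB

/-- From the start of a walk whose support is an `SRel`-chain, every support
vertex is `SRel`-reachable. -/
lemma reach_start : ∀ {a b : I ⊕ J} (p : (gammaSG G M).Walk a b),
    p.support.Chain' (SRel G M) → ∀ x ∈ p.support, ReflTransGen (SRel G M) a x := by
  intro a b p
  induction p with
  | nil =>
    intro _ x hx
    simp only [SimpleGraph.Walk.support_nil, List.mem_singleton] at hx
    exact hx ▸ ReflTransGen.refl
  | @cons a c b h q ih =>
    intro hc x hx
    rw [SimpleGraph.Walk.support_cons] at hc hx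
    rw [q.support_eq_cons] at hc
    obtain ⟨hac, hc'⟩ := List.isChain_cons_cons.mp hc
    rw [← q.support_eq_cons] at hc'
    rcases List.mem_cons.mp hx with rfl | hx
    · exact ReflTransGen.refl
    · exact ReflTransGen.head hac (ih hc' x hx)

/-- Every support vertex reaches the end of such a walk. -/
lemma reach_end : ∀ {a b : I ⊕ J} (p : (gammaSG G M).Walk a b),
    p.support.Chain' (SRel G M) → ∀ x ∈ p.support, ReflTransGen (SRel G M) x b := by
  intro a b p
  induction p with
  | nil =>
    intro _ x hx
    simp only [SimpleGraph.Walk.support_nil, List.mem_singleton] at hx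
    exact hx ▸ ReflTransGen.refl
  | @cons a c b h q ih =>
    intro hc x hx
    rw [SimpleGraph.Walk.support_cons] at hc hx
    rw [q.support_eq_cons] at hc
    obtain ⟨hac, hc'⟩ := List.isChain_cons_cons.mp hc
    rw [← q.support_eq_cons] at hc'
    rcases List.mem_cons.mp hx with rfl | hx
    · exact ReflTransGen.head hac (ih hc' c q.start_mem_support)
    · exact ih hc' x hx

/-- Every edge of such a walk is of the form `s(x, succ x)`. -/
lemma edges_char : ∀ {a b : I ⊕ J} (p : (gammaSG G M).Walk a b),
    p.support.Chain' (SRel G M) → ∀ e ∈ p.edges,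
      ∃ x y, x ∈ p.support ∧ SRel G M x y ∧ e = s(x, y) := by
  intro a b p
  induction p with
  | nil => intro _ e he; simp at he
  | @cons a c b h q ih =>
    intro hc e he
    rw [SimpleGraph.Walk.support_cons] at hc
    rw [q.support_eq_cons] at hc
    obtain ⟨hac, hc'⟩ := List.isChain_cons_cons.mp hc
    rw [← q.support_eq_cons] at hc'
    rw [SimpleGraph.Walk.edges_cons] at he
    rcases List.mem_cons.mp he with rfl | he
    · exact ⟨a, c, by simp [SimpleGraph.Walk.support_cons], hac, rfl⟩
    · obtain ⟨x, y, hx, hS, hE⟩ := ih hc' e he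
      exact ⟨x, y, by simp [SimpleGraph.Walk.support_cons, hx], hS, hE⟩

/-- Every support vertex other than the endpoint has a successor whose edge
lies on the walk. -/
lemma succ_edge : ∀ {a b : I ⊕ J} (p : (gammaSG G M).Walk a b),
    p.support.Chain' (SRel G M) → ∀ x ∈ p.support, x ≠ b →
      ∃ z, SRel G M x z ∧ s(x, z) ∈ p.edges := by
  intro a b p
  induction p with
  | nil =>
    intro _ x hx hxb
    simp only [SimpleGraph.Walk.support_nil, List.mem_singleton] at hx
    exact absurd hx hxb
  | @cons a c b h q ih =>
    intro hc x hx hxb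
    rw [SimpleGraph.Walk.support_cons] at hc hx
    rw [q.support_eq_cons] at hc
    obtain ⟨hac, hc'⟩ := List.isChain_cons_cons.mp hc
    rw [← q.support_eq_cons] at hc'
    rcases List.mem_cons.mp hx with rfl | hx
    · exact ⟨c, hac, by simp [SimpleGraph.Walk.edges_cons]⟩
    · obtain ⟨z, hS, hE⟩ := ih hc' x hx hxb
      exact ⟨z, hS, by simp [SimpleGraph.Walk.edges_cons, hE]⟩

/-- For a closed, nonempty, `SRel`-oriented walk, every support vertex has a
successor whose edge lies on the walk. -/
lemma cyc_succ {u : I ⊕ J} (p : (gammaSG G M).Walk u u) (hnil : p ≠ SimpleGraph.Walk.nil)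
    (hc : p.support.Chain' (SRel G M)) :
    ∀ x ∈ p.support, ∃ z, SRel G M x z ∧ s(x, z) ∈ p.edges := by
  intro x hx
  by_cases hxu : x = u
  · subst hxu
    cases p with
    | nil => exact absurd rfl hnil
    | @cons _ c _ h q =>
      rw [SimpleGraph.Walk.support_cons, q.support_eq_cons] at hc
      obtain ⟨hac, _⟩ := List.isChain_cons_cons.mp hc
      exact ⟨c, hac, by simp [SimpleGraph.Walk.edges_cons]⟩
  · exact succ_edge p hc x hx hxu

/-- Closure: for a closed oriented cycle walk, the successor of a support
vertex stays in the support, and the corresponding edge is on the walk. -/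
lemma cyc_closure (hM : IsMatching G M) {u : I ⊕ J} (p : (gammaSG G M).Walk u u)
    (hnil : p ≠ SimpleGraph.Walk.nil) (hc : p.support.Chain' (SRel G M))
    {x y : I ⊕ J} (hx : x ∈ p.support) (hxy : SRel G M x y) :
    y ∈ p.support ∧ s(x, y) ∈ p.edges := by
  obtain ⟨z, hS, hE⟩ := cyc_succ p hnil hc x hx
  have hyz : y = z := SRel_func hM hxy hS
  subst hyz
  exact ⟨p.snd_mem_support_of_mem_edges hE, hE⟩

/-- Normalization: any cycle can be replaced (up to support/edge sets) by a
closed walk whose support is an `SRel`-chain. -/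
lemma cycle_normalize (hM : IsMatching G M) {u : I ⊕ J} (p : (gammaSG G M).Walk u u)
    (hp : p.IsCycle) :
    ∃ P : (gammaSG G M).Walk u u, P ≠ SimpleGraph.Walk.nil ∧
      P.support.Chain' (SRel G M) ∧
      (∀ x, x ∈ P.support ↔ x ∈ p.support) ∧
      (∀ e, e ∈ P.edges ↔ e ∈ p.edges) := by
  have hlen3 : 3 ≤ p.length := hp.three_le_length
  have hlen : 4 ≤ p.support.length := by rw [SimpleGraph.Walk.length_support]; omega
  have hclosed : p.support.getLast p.support_ne_nil = p.support.head p.support_ne_nil := by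
    rw [p.getLast_support, p.head_support]
  have hdi := chain_dichotomy (A := (gammaSG G M).Adj) (S := SRel G M)
    (fun x y h => SRel_adj.mp h) (fun v x y => SRel_func hM)
    p.support p.isChain_adj_support hlen p.support_ne_nil hclosed hp.support_nodup
  rcases hdi with hdi | hdi
  · refine ⟨p, hp.ne_nil, hdi, fun x => Iff.rfl, fun e => Iff.rfl⟩
  · refine ⟨p.reverse, ?_, ?_, ?_, ?_⟩
    · intro hcon
      apply hp.ne_nil
      have h2 := congrArg SimpleGraph.Walk.reverse hcon
      rwa [SimpleGraph.Walk.reverse_reverse] at h2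
    · rwa [SimpleGraph.Walk.support_reverse]
    · intro x; rw [SimpleGraph.Walk.support_reverse, List.mem_reverse]
    · intro e; rw [SimpleGraph.Walk.edges_reverse, List.mem_reverse]

end AuxOneCycle

/-- every connected component of the active graph `Γ(M)` of a
stable matching contains at most one cycle: any two cycles lying in the same
component have the same edge set. -/
theorem gamma_component_at_most_one_cycle {I J : Type} [Fintype I] [Fintype J]
    [DecidableEq I] [DecidableEq J] (G : PrefSystem I J)
    (M : Finset (I × J)) (hM : IsStable G M) {u v : I ⊕ J}
    (p : (gammaSG G M).Walk u u) (q : (gammaSG G M).Walk v v)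
    (hp : p.IsCycle) (hq : q.IsCycle)
    (huv : (gammaSG G M).Reachable u v) :
    p.edges.toFinset = q.edges.toFinset := by
  classical
  obtain ⟨hMm, -⟩ := hM
  obtain ⟨P, hPnil, hPc, hPsupp, hPedge⟩ := cycle_normalize hMm p hp
  obtain ⟨Q, hQnil, hQc, hQsupp, hQedge⟩ := cycle_normalize hMm q hq
  -- membership in Q.support is preserved along SRel-chains
  have Qstep : ∀ {x y : I ⊕ J}, Relation.ReflTransGen (SRel G M) x y →
      x ∈ Q.support → y ∈ Q.support := by
    intro x y hr hx
    induction hr with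
    | refl => exact hx
    | tail _ hS ih => exact (cyc_closure hMm Q hQnil hQc ih hS).1
  have Pstep : ∀ {x y : I ⊕ J}, Relation.ReflTransGen (SRel G M) x y →
      x ∈ P.support → y ∈ P.support := by
    intro x y hr hx
    induction hr with
    | refl => exact hx
    | tail _ hS ih => exact (cyc_closure hMm P hPnil hPc ih hS).1
  -- the "reaches P" predicate, closed under adjacency
  have hadjR : ∀ x y : I ⊕ J, (gammaSG G M).Adj x y →
      (∃ z ∈ P.support, Relation.ReflTransGen (SRel G M) y z) →
      ∃ z ∈ P.support, Relation.ReflTransGen (SRel G M) x z := by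
    intro x y hadj ⟨z, hz, hr⟩
    rcases SRel_adj.mp hadj with hS | hS
    · exact ⟨z, hz, Relation.ReflTransGen.head hS hr⟩
    · rcases hr.cases_head with rfl | ⟨w, hyw, hwz⟩
      · exact ⟨x, (cyc_closure hMm P hPnil hPc hz hS).1, Relation.ReflTransGen.refl⟩
      · have hxw : x = w := SRel_func hMm hS hyw
        exact ⟨z, hz, hxw ▸ hwz⟩
  -- propagate along any walk
  have hwalk : ∀ {a b : I ⊕ J} (w : (gammaSG G M).Walk a b),
      (∃ z ∈ P.support, Relation.ReflTransGen (SRel G M) b z) →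
      ∃ z ∈ P.support, Relation.ReflTransGen (SRel G M) a z := by
    intro a b w
    induction w with
    | nil => exact id
    | cons h _ ih => exact fun hb => hadjR _ _ h (ih hb)
  -- v reaches P
  have hvP : ∃ z ∈ P.support, Relation.ReflTransGen (SRel G M) v z :=
    hwalk huv.some.reverse ⟨u, P.start_mem_support, Relation.ReflTransGen.refl⟩
  -- hence the supports intersect
  obtain ⟨w0, hw0P, hw0r⟩ := hvP
  have hw0Q : w0 ∈ Q.support := Qstep hw0r Q.start_mem_support
  -- supports have the same elements
  have hPQ : ∀ x, x ∈ P.support → x ∈ Q.support := by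
    intro x hx
    have hr : Relation.ReflTransGen (SRel G M) w0 x :=
      (reach_end P hPc w0 hw0P).trans (reach_start P hPc x hx)
    exact Qstep hr hw0Q
  have hQP : ∀ x, x ∈ Q.support → x ∈ P.support := by
    intro x hx
    have hr : Relation.ReflTransGen (SRel G M) w0 x :=
      (reach_end Q hQc w0 hw0Q).trans (reach_start Q hQc x hx)
    exact Pstep hr hw0P
  -- edge sets coincide
  ext e
  simp only [List.mem_toFinset]
  constructor
  · intro he
    obtain ⟨x, y, hx, hS, rfl⟩ := edges_char P hPc e ((hPedge e).mpr he)
    exact (hQedge _).mp (cyc_closure hMm Q hQnil hQc (hPQ x hx) hS).2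
  · intro he
    obtain ⟨x, y, hx, hS, rfl⟩ := edges_char Q hQc e ((hQedge e).mpr he)
    exact (hPedge _).mp (cyc_closure hMm P hPnil hPc (hQP x hx) hS).2
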